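/- Let (V₁, λ₁) and (V₂, λ₂) be nonsingular linking forms over Λ = ℂ[t^{±1}] whose underlying modules V₁ and V₂ have orders with distinct roots (i.e. there is no ω ∈ ℂ such that both V₁ and V₂ contain a nonzero element annihilated by t − ω). If the orthogonal direct sum (V₁ ⊕ V₂, λ₁ ⊕ λ₂) is metabolic, then (V₁, λ₁) and (V₂, λ₂) are both metabolic. -/

import Mathlib

/-- The ring `Λ = ℂ[t^{±1}]` of complex Laurent polynomials. -/
abbrev LC : Type := LaurentPolynomial ℂ

instance : IsDomain LC := NoZeroDivisors.to_isDomain _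

/-- The field `ℂ(t)` of fractions of `Λ`. -/
abbrev CtField : Type := FractionRing LC

/-- The copy of `Λ` inside `ℂ(t)`, as a `Λ`-submodule. -/
noncomputable abbrev LCinCt : Submodule LC CtField := Submodule.span LC {(1 : CtField)}

/-- The quotient `Λ`-module `ℂ(t)/Λ`. -/
abbrev QLC : Type := CtField ⧸ LCinCt

open Polynomial LaurentPolynomial

/-- A f.g. torsion module over `LC` has a nonzero annihilator. -/
lemma exists_ann {V : Type} [AddCommGroup V] [Module LC V] [Module.Finite LC V]
    (htor : ∀ x : V, ∃ a : LC, a ≠ 0 ∧ a • x = 0) :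
    ∃ p : LC, p ≠ 0 ∧ ∀ x : V, p • x = 0 := by
  classical
  obtain ⟨S, hS⟩ := Module.Finite.fg_top (R := LC) (M := V)
  choose f hf0 hfx using htor
  refine ⟨∏ x ∈ S, f x, Finset.prod_ne_zero_iff.2 fun x _ => hf0 x, ?_⟩
  have hle : Submodule.span LC (S : Set V) ≤
      LinearMap.ker (LinearMap.lsmul LC V (∏ x ∈ S, f x)) := by
    rw [Submodule.span_le]
    intro g hg
    have hgS : g ∈ S := hg
    simp only [SetLike.mem_coe, LinearMap.mem_ker, LinearMap.lsmul_apply]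
    rw [← Finset.mul_prod_erase S f hgS, mul_comm, mul_smul, hfx g, smul_zero]
  intro x
  have := hle (hS ▸ Submodule.mem_top : x ∈ Submodule.span LC (S : Set V))
  simpa using this

/-- Strip factors `X - ω` acting injectively from an annihilating polynomial. -/
lemma strip {V : Type} [AddCommGroup V] [Module LC V] :
    ∀ (n : ℕ) (q : ℂ[X]), q.natDegree = n → q ≠ 0 → (∀ x : V, (toLaurent q) • x = 0) →
    ∃ q' : ℂ[X], q' ≠ 0 ∧ (∀ x : V, (toLaurent q') • x = 0) ∧
      ∀ ω : ℂ, ω ≠ 0 → q'.IsRoot ω →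
        ∃ x : V, x ≠ 0 ∧ (T 1 - LaurentPolynomial.C ω) • x = 0 := by
  intro n
  induction n using Nat.strong_induction_on with
  | _ n ih =>
    intro q hdeg hq hann
    by_cases hgood : ∀ ω : ℂ, ω ≠ 0 → q.IsRoot ω →
        ∃ x : V, x ≠ 0 ∧ (T 1 - LaurentPolynomial.C ω) • x = 0
    · exact ⟨q, hq, hann, hgood⟩
    push_neg at hgood
    obtain ⟨ω, hω0, hroot, hinj⟩ := hgood
    obtain ⟨r, hr⟩ := (Polynomial.dvd_iff_isRoot.2 hroot)
    have hrne : r ≠ 0 := by rintro rfl; simp at hr; exact hq hr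
    have hXne : (X - Polynomial.C ω : ℂ[X]) ≠ 0 := Polynomial.X_sub_C_ne_zero ω
    have hdr : r.natDegree < n := by
      have := Polynomial.natDegree_mul hXne hrne
      rw [← hr, Polynomial.natDegree_X_sub_C] at this
      omega
    have hannr : ∀ x : V, (toLaurent r) • x = 0 := by
      intro x
      by_contra hne
      have h0 : (T 1 - LaurentPolynomial.C ω) • ((toLaurent r) • x) = 0 := by
        rw [← mul_smul]
        have : (T 1 - LaurentPolynomial.C ω) * toLaurent r = toLaurent q := by
          rw [hr, map_mul, map_sub, Polynomial.toLaurent_X, Polynomial.toLaurent_C]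
        rw [this]; exact hann x
      exact (hinj _ hne) h0
    exact ih r.natDegree hdr r rfl hrne hannr

/-- The key arithmetic input: `1 = a + b` with `a` annihilating `V₁`, `b` annihilating `V₂`. -/
lemma exists_split {V₁ V₂ : Type} [AddCommGroup V₁] [AddCommGroup V₂]
    [Module LC V₁] [Module LC V₂] [Module.Finite LC V₁] [Module.Finite LC V₂]
    (htor₁ : ∀ x : V₁, ∃ a : LC, a ≠ 0 ∧ a • x = 0)
    (htor₂ : ∀ x : V₂, ∃ a : LC, a ≠ 0 ∧ a • x = 0)
    (hroots : ¬ ∃ ω : ℂ,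
      (∃ x : V₁, x ≠ 0 ∧ (T 1 - LaurentPolynomial.C ω) • x = 0) ∧
      (∃ y : V₂, y ≠ 0 ∧ (T 1 - LaurentPolynomial.C ω) • y = 0)) :
    ∃ a b : LC, a + b = 1 ∧ (∀ x : V₁, a • x = 0) ∧ (∀ y : V₂, b • y = 0) := by
  obtain ⟨p₁, hp₁0, hp₁⟩ := exists_ann htor₁
  obtain ⟨p₂, hp₂0, hp₂⟩ := exists_ann htor₂
  obtain ⟨n₁, q₁, hq₁⟩ := LaurentPolynomial.exists_T_pow p₁
  obtain ⟨n₂, q₂, hq₂⟩ := LaurentPolynomial.exists_T_pow p₂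
  have hq₁0 : q₁ ≠ 0 := by
    rintro rfl
    rw [map_zero] at hq₁
    exact (mul_ne_zero hp₁0 (LaurentPolynomial.isUnit_T (n₁ : ℤ)).ne_zero) hq₁.symm
  have hq₂0 : q₂ ≠ 0 := by
    rintro rfl
    rw [map_zero] at hq₂
    exact (mul_ne_zero hp₂0 (LaurentPolynomial.isUnit_T (n₂ : ℤ)).ne_zero) hq₂.symm
  have hannq₁ : ∀ x : V₁, (toLaurent q₁) • x = 0 := by
    intro x; rw [hq₁, mul_comm, mul_smul, hp₁ x, smul_zero]
  have hannq₂ : ∀ y : V₂, (toLaurent q₂) • y = 0 := by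
    intro y; rw [hq₂, mul_comm, mul_smul, hp₂ y, smul_zero]
  obtain ⟨q₁', hq₁'0, hann₁, hroot₁⟩ := strip (V := V₁) q₁.natDegree q₁ rfl hq₁0 hannq₁
  obtain ⟨q₂', hq₂'0, hann₂, hroot₂⟩ := strip (V := V₂) q₂.natDegree q₂ rfl hq₂0 hannq₂
  classical
  set d := EuclideanDomain.gcd q₁' q₂' with hd
  have hd0 : d ≠ 0 := by
    rw [hd, Ne, EuclideanDomain.gcd_eq_zero_iff]
    rintro ⟨h, -⟩; exact hq₁'0 h
  have hdroots : ∀ ω : ℂ, d.IsRoot ω → ω = 0 := by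
    intro ω hωroot
    by_contra hω0
    have h1 : q₁'.IsRoot ω := by
      obtain ⟨c, hc⟩ := EuclideanDomain.gcd_dvd_left q₁' q₂'
      rw [Polynomial.IsRoot, hc, Polynomial.eval_mul, hωroot, zero_mul]
    have h2 : q₂'.IsRoot ω := by
      obtain ⟨c, hc⟩ := EuclideanDomain.gcd_dvd_right q₁' q₂'
      rw [Polynomial.IsRoot, hc, Polynomial.eval_mul, hωroot, zero_mul]
    exact hroots ⟨ω, hroot₁ ω hω0 h1, hroot₂ ω hω0 h2⟩
  -- d = C lc * X ^ m
  have hsplits : d.Splits := IsAlgClosed.splits d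
  have hdeq := hsplits.eq_prod_roots
  have hmap : Multiset.map (fun a => X - Polynomial.C a) d.roots
      = Multiset.replicate (Multiset.card d.roots) (X : ℂ[X]) := by
    rw [← Multiset.map_const']
    refine Multiset.map_congr rfl fun a ha => ?_
    have : a = 0 := hdroots a (Polynomial.isRoot_of_mem_roots ha)
    rw [this, map_zero, sub_zero]
  rw [hmap, Multiset.prod_replicate] at hdeq
  -- toLaurent d is a unit
  have hlc : d.leadingCoeff ≠ 0 := Polynomial.leadingCoeff_ne_zero.2 hd0
  have hunit : IsUnit (toLaurent d) := by
    rw [hdeq, map_mul, Polynomial.toLaurent_C, Polynomial.toLaurent_X_pow]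
    exact ((isUnit_iff_ne_zero.2 hlc).map LaurentPolynomial.C).mul
      (LaurentPolynomial.isUnit_T _)
  obtain ⟨u, hu⟩ := hunit
  have hbez := EuclideanDomain.gcd_eq_gcd_ab q₁' q₂'
  have hbezL : (u : LC) = toLaurent q₁' * toLaurent (EuclideanDomain.gcdA q₁' q₂')
      + toLaurent q₂' * toLaurent (EuclideanDomain.gcdB q₁' q₂') := by
    rw [hu, ← map_mul, ← map_mul, ← map_add, ← hbez]
  refine ⟨(↑u⁻¹ : LC) * toLaurent (EuclideanDomain.gcdA q₁' q₂') * toLaurent q₁',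
    (↑u⁻¹ : LC) * toLaurent (EuclideanDomain.gcdB q₁' q₂') * toLaurent q₂', ?_, ?_, ?_⟩
  · have h1 : ((u⁻¹ : LCˣ) : LC) * (u : LC) = 1 := u.inv_mul
    calc (↑u⁻¹ : LC) * toLaurent (EuclideanDomain.gcdA q₁' q₂') * toLaurent q₁'
        + (↑u⁻¹ : LC) * toLaurent (EuclideanDomain.gcdB q₁' q₂') * toLaurent q₂'
        = (↑u⁻¹ : LC) * (toLaurent q₁' * toLaurent (EuclideanDomain.gcdA q₁' q₂')
          + toLaurent q₂' * toLaurent (EuclideanDomain.gcdB q₁' q₂')) := by ring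
      _ = 1 := by rw [← hbezL, h1]
  · intro x; rw [mul_smul, hann₁ x, smul_zero]
  · intro y; rw [mul_smul, hann₂ y, smul_zero]

/-- Proposition 4.1(2): if `(V₁,λ₁)` and `(V₂,λ₂)` are nonsingular linking forms over
`Λ = ℂ[t^{±1}]` whose underlying modules have orders with distinct roots (no `ω ∈ ℂ` such
that both `V₁` and `V₂` contain a nonzero element annihilated by `t - ω`), and if the
orthogonal direct sum `(V₁ ⊕ V₂, λ₁ ⊕ λ₂)` is metabolic, then both `(V₁,λ₁)` and `(V₂,λ₂)`
are metabolic. -/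
theorem metabolic_sum_of_distinct_roots {V₁ V₂ : Type}
    [AddCommGroup V₁] [AddCommGroup V₂] [Module LC V₁] [Module LC V₂]
    -- finitely generated torsion modules
    [Module.Finite LC V₁] [Module.Finite LC V₂]
    (htor₁ : ∀ x : V₁, ∃ a : LC, a ≠ 0 ∧ a • x = 0)
    (htor₂ : ∀ x : V₂, ∃ a : LC, a ≠ 0 ∧ a • x = 0)
    -- the involution `#` on `Λ`, with `#(C a) = C (conj a)` and `#(t) = t⁻¹`, together with
    -- its extension to `ℂ(t)`
    (inv : LC →+* LC)
    (hinvC : ∀ a : ℂ, inv (LaurentPolynomial.C a) = LaurentPolynomial.C (starRingEnd ℂ a))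
    (hinvT : inv (LaurentPolynomial.T 1) = LaurentPolynomial.T (-1))
    (invQ : CtField →+* CtField)
    (hinvQ : ∀ a : LC, invQ (algebraMap LC CtField a) = algebraMap LC CtField (inv a))
    -- the linking forms
    (l₁ : V₁ → V₁ → QLC) (l₂ : V₂ → V₂ → QLC)
    -- biadditive, `Λ`-linear in the first variable, `#`-semilinear in the second variable
    (h₁add : ∀ x y z : V₁, l₁ (x + y) z = l₁ x z + l₁ y z)
    (h₁lin : ∀ (a : LC) (x y : V₁), l₁ (a • x) y = a • l₁ x y)
    (h₁add' : ∀ x y z : V₁, l₁ x (y + z) = l₁ x y + l₁ x z)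
    (h₁semi : ∀ (a : LC) (x y : V₁), l₁ x (a • y) = inv a • l₁ x y)
    (h₂add : ∀ x y z : V₂, l₂ (x + y) z = l₂ x z + l₂ y z)
    (h₂lin : ∀ (a : LC) (x y : V₂), l₂ (a • x) y = a • l₂ x y)
    (h₂add' : ∀ x y z : V₂, l₂ x (y + z) = l₂ x y + l₂ x z)
    (h₂semi : ∀ (a : LC) (x y : V₂), l₂ x (a • y) = inv a • l₂ x y)
    -- Hermitian: `λ(y,x) = #(λ(x,y))`, via representatives in `ℂ(t)`
    (h₁herm : ∀ x y : V₁, ∃ r : CtField,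
      (Submodule.Quotient.mk r : QLC) = l₁ x y ∧ (Submodule.Quotient.mk (invQ r) : QLC) = l₁ y x)
    (h₂herm : ∀ x y : V₂, ∃ r : CtField,
      (Submodule.Quotient.mk r : QLC) = l₂ x y ∧ (Submodule.Quotient.mk (invQ r) : QLC) = l₂ y x)
    -- nonsingular: the adjoint is a bijection onto the `#`-semilinear maps to `ℂ(t)/Λ`
    (h₁inj : ∀ x : V₁, (∀ y : V₁, l₁ x y = 0) → x = 0)
    (h₁surj : ∀ g : V₁ → QLC, (∀ y z : V₁, g (y + z) = g y + g z) →
      (∀ (a : LC) (y : V₁), g (a • y) = inv a • g y) → ∃ x : V₁, ∀ y : V₁, l₁ x y = g y)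
    (h₂inj : ∀ x : V₂, (∀ y : V₂, l₂ x y = 0) → x = 0)
    (h₂surj : ∀ g : V₂ → QLC, (∀ y z : V₂, g (y + z) = g y + g z) →
      (∀ (a : LC) (y : V₂), g (a • y) = inv a • g y) → ∃ x : V₂, ∀ y : V₂, l₂ x y = g y)
    -- the orders of `V₁` and `V₂` have distinct roots
    (hroots : ¬ ∃ ω : ℂ,
      (∃ x : V₁, x ≠ 0 ∧ (LaurentPolynomial.T 1 - LaurentPolynomial.C ω) • x = 0) ∧
      (∃ y : V₂, y ≠ 0 ∧ (LaurentPolynomial.T 1 - LaurentPolynomial.C ω) • y = 0))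
    -- the orthogonal direct sum `λ₁ ⊕ λ₂` is metabolic
    (hmet : ∃ L : Submodule LC (V₁ × V₂),
      ∀ z : V₁ × V₂, z ∈ L ↔ ∀ w ∈ L, l₁ z.1 w.1 + l₂ z.2 w.2 = 0) :
    (∃ L₁ : Submodule LC V₁, ∀ x : V₁, x ∈ L₁ ↔ ∀ y ∈ L₁, l₁ x y = 0) ∧
    (∃ L₂ : Submodule LC V₂, ∀ x : V₂, x ∈ L₂ ↔ ∀ y ∈ L₂, l₂ x y = 0) := by
  obtain ⟨L, hL⟩ := hmet
  obtain ⟨a, b, hab, ha, hb⟩ := exists_split htor₁ htor₂ hroots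
  have hbV₁ : ∀ x : V₁, b • x = x := fun x => by
    have hb' : b = 1 - a := by rw [← hab]; ring
    rw [hb', sub_smul, one_smul, ha x, sub_zero]
  have haV₂ : ∀ y : V₂, a • y = y := fun y => by
    have ha' : a = 1 - b := by rw [← hab]; ring
    rw [ha', sub_smul, one_smul, hb y, sub_zero]
  -- zero-in-first-argument lemmas
  have h₁z : ∀ y : V₁, l₁ 0 y = 0 := fun y => by
    have := h₁lin 0 0 y
    rwa [zero_smul, zero_smul] at this
  have h₂z : ∀ y : V₂, l₂ 0 y = 0 := fun y => by
    have := h₂lin 0 0 y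
    rwa [zero_smul, zero_smul] at this
  -- L splits
  have hsplit₁ : ∀ z : V₁ × V₂, z ∈ L → ((z.1, 0) : V₁ × V₂) ∈ L := by
    intro z hz
    have heq : b • z = ((z.1, 0) : V₁ × V₂) := by
      ext
      · rw [Prod.smul_fst, hbV₁]
      · rw [Prod.smul_snd, hb]
    exact heq ▸ L.smul_mem b hz
  have hsplit₂ : ∀ z : V₁ × V₂, z ∈ L → ((0, z.2) : V₁ × V₂) ∈ L := by
    intro z hz
    have heq : a • z = ((0, z.2) : V₁ × V₂) := by
      ext
      · rw [Prod.smul_fst, ha]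
      · rw [Prod.smul_snd, haV₂]
    exact heq ▸ L.smul_mem a hz
  constructor
  · refine ⟨Submodule.comap (LinearMap.inl LC V₁ V₂) L, fun x => ?_⟩
    constructor
    · intro hx y hy
      have hmem : ((x, 0) : V₁ × V₂) ∈ L := hx
      have hymem : ((y, 0) : V₁ × V₂) ∈ L := hy
      have := (hL ((x, 0) : V₁ × V₂)).1 hmem ((y, 0) : V₁ × V₂) hymem
      simpa [h₂z] using this
    · intro hx
      show ((x, 0) : V₁ × V₂) ∈ L
      rw [hL]
      intro w hw
      have hw1 : w.1 ∈ Submodule.comap (LinearMap.inl LC V₁ V₂) L := by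
        show ((w.1, 0) : V₁ × V₂) ∈ L
        exact hsplit₁ w hw
      have : l₁ x w.1 = 0 := hx w.1 hw1
      simp [this, h₂z]
  · refine ⟨Submodule.comap (LinearMap.inr LC V₁ V₂) L, fun x => ?_⟩
    constructor
    · intro hx y hy
      have hmem : ((0, x) : V₁ × V₂) ∈ L := hx
      have hymem : ((0, y) : V₁ × V₂) ∈ L := hy
      have := (hL ((0, x) : V₁ × V₂)).1 hmem ((0, y) : V₁ × V₂) hymem
      simpa [h₁z] using this
    · intro hx
      show ((0, x) : V₁ × V₂) ∈ L
      rw [hL]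
      intro w hw
      have hw2 : w.2 ∈ Submodule.comap (LinearMap.inr LC V₁ V₂) L := by
        show ((0, w.2) : V₁ × V₂) ∈ L
        exact hsplit₂ w hw
      have : l₂ x w.2 = 0 := hx w.2 hw2
      simp [this, h₁z]
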